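/- Let c be an odd positive integer, and for natural numbers n ≥ m, let L₂' = {l : 1 ≤ l ≤ c·2^{n−m+1} − 1, ν₂(l) = n−m+1, and s₂(l/2^{n−m+1}) + s₂(c − l/2^{n−m+1}) = s₂(c)} and L₃' = {l : 1 ≤ l ≤ c·2^{n−m+1} − 1, ν₂(l) > n−m+1, and s₂(l/2^{n−m+1}) + s₂(c − l/2^{n−m+1}) = s₂(c)}. Then the map l ↦ c·2^{n−m+1} − l is a bijection from L₂' to L₃', and in particular |L₂'| = |L₃'|. -/

import Mathlib

/-- binary digit sum -/
def s2 (n : ℕ) : ℕ := (Nat.digits 2 n).sum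

lemma val_odd (k x : ℕ) (hx : Odd x) : padicValNat 2 (2^k * x) = k := by
  have hx0 : x ≠ 0 := by rintro rfl; simp [Nat.odd_iff] at hx
  rw [padicValNat.mul (pow_ne_zero _ two_ne_zero) hx0, padicValNat.prime_pow,
    padicValNat.eq_zero_of_not_dvd (by simpa [Nat.odd_iff, Nat.two_dvd_ne_zero] using hx),
    add_zero]

lemma val_even (k x : ℕ) (hx : Even x) (hx0 : x ≠ 0) : k < padicValNat 2 (2^k * x) := by
  have hdvd : 2^(k+1) ∣ 2^k * x := by
    obtain ⟨y, rfl⟩ := hx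
    exact ⟨y, by ring⟩
  have := (padicValNat_dvd_iff_le (by positivity : 2^k*x ≠ 0)).mp hdvd
  omega

/-- Main reflection step. -/
lemma refl_step (c k l : ℕ) (hc : 0 < c) (h1 : 1 ≤ l) (h2 : l ≤ c*2^k - 1)
    (hd : 2^k ∣ l) (hs : s2 (l/2^k) + s2 (c - l/2^k) = s2 c) :
    1 ≤ c*2^k - l ∧ c*2^k - l ≤ c*2^k - 1 ∧ (c*2^k - l)/2^k = c - l/2^k ∧
      1 ≤ l/2^k ∧ l/2^k < c ∧ c*2^k - l = 2^k * (c - l/2^k) ∧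
      s2 ((c*2^k - l)/2^k) + s2 (c - (c*2^k - l)/2^k) = s2 c := by
  obtain ⟨a, rfl⟩ := hd
  have hk0 : 0 < (2:ℕ)^k := Nat.pow_pos (by norm_num)
  have ha : (2^k * a) / 2^k = a := Nat.mul_div_cancel_left _ hk0
  have hac : a < c := by
    by_contra h
    push_neg at h
    have : c * 2^k ≤ 2^k * a := by
      rw [mul_comm c]
      exact Nat.mul_le_mul_left _ h
    omega
  have ha1 : 1 ≤ a := by
    rcases Nat.eq_zero_or_pos a with h | h
    · simp [h] at h1
    · exact h
  have heq : c*2^k - 2^k*a = 2^k * (c - a) := by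
    rw [Nat.mul_sub, mul_comm c]
  have hdiv : (c*2^k - 2^k*a)/2^k = c - a := by
    rw [heq, Nat.mul_div_cancel_left _ hk0]
  have hsub : c - (c - a) = a := Nat.sub_sub_self hac.le
  have hlt : 2^k * a < c * 2^k := by
    calc 2^k * a < 2^k * c := by exact (Nat.mul_lt_mul_left hk0).mpr hac
    _ = c * 2^k := mul_comm _ _
  refine ⟨by omega, by omega, by rw [hdiv, ha], by rw [ha]; exact ha1,
    by rw [ha]; exact hac, by rw [heq, ha], ?_⟩
  rw [ha] at hs
  rw [hdiv, hsub]
  omega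

theorem bijOn_L2_L3 (c n m : ℕ) (hc : 0 < c) (hcodd : Odd c) (hmn : m ≤ n) :
    Set.BijOn (fun l => c * 2 ^ (n - m + 1) - l)
      {l : ℕ | 1 ≤ l ∧ l ≤ c * 2 ^ (n - m + 1) - 1 ∧ padicValNat 2 l = n - m + 1 ∧
        s2 (l / 2 ^ (n - m + 1)) + s2 (c - l / 2 ^ (n - m + 1)) = s2 c}
      {l : ℕ | 1 ≤ l ∧ l ≤ c * 2 ^ (n - m + 1) - 1 ∧ n - m + 1 < padicValNat 2 l ∧
        s2 (l / 2 ^ (n - m + 1)) + s2 (c - l / 2 ^ (n - m + 1)) = s2 c} ∧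
    {l : ℕ | 1 ≤ l ∧ l ≤ c * 2 ^ (n - m + 1) - 1 ∧ padicValNat 2 l = n - m + 1 ∧
        s2 (l / 2 ^ (n - m + 1)) + s2 (c - l / 2 ^ (n - m + 1)) = s2 c}.ncard =
    {l : ℕ | 1 ≤ l ∧ l ≤ c * 2 ^ (n - m + 1) - 1 ∧ n - m + 1 < padicValNat 2 l ∧
        s2 (l / 2 ^ (n - m + 1)) + s2 (c - l / 2 ^ (n - m + 1)) = s2 c}.ncard := by
  set k := n - m + 1 with hk
  have hk0 : 0 < (2:ℕ)^k := Nat.pow_pos (by norm_num)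
  set S := {l : ℕ | 1 ≤ l ∧ l ≤ c * 2 ^ k - 1 ∧ padicValNat 2 l = k ∧
    s2 (l / 2 ^ k) + s2 (c - l / 2 ^ k) = s2 c} with hS
  set T := {l : ℕ | 1 ≤ l ∧ l ≤ c * 2 ^ k - 1 ∧ k < padicValNat 2 l ∧
    s2 (l / 2 ^ k) + s2 (c - l / 2 ^ k) = s2 c} with hT
  have hmapsto : ∀ l ∈ S, c * 2^k - l ∈ T := by
    rintro l ⟨h1, h2, hv, hs⟩
    have hd : 2^k ∣ l := by
      rw [← hv]
      exact pow_padicValNat_dvd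
    obtain ⟨r1, r2, r3, r4, r5, r6, r7⟩ := refl_step c k l hc h1 h2 hd hs
    refine ⟨r1, r2, ?_, r7⟩
    -- l/2^k is odd since padicValNat 2 l = k
    obtain ⟨a, rfl⟩ := hd
    rw [Nat.mul_div_cancel_left _ hk0] at r3 r4 r5 r6
    have haodd : Odd a := by
      rcases Nat.even_or_odd a with he | ho
      · have hcon := val_even k a he (by omega)
        omega
      · exact ho
    rw [r6]
    refine val_even k (c - a) (Nat.even_iff.mpr ?_) (by omega)
    rw [Nat.odd_iff] at hcodd haodd
    omega
  have hmapsto' : ∀ l ∈ T, c * 2^k - l ∈ S := by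
    rintro l ⟨h1, h2, hv, hs⟩
    have hd : 2^k ∣ l := dvd_trans (pow_dvd_pow 2 (by omega : k ≤ k+1))
      (by rw [← Nat.succ_le_iff] at hv
          exact dvd_trans (pow_dvd_pow 2 hv) pow_padicValNat_dvd)
    obtain ⟨r1, r2, r3, r4, r5, r6, r7⟩ := refl_step c k l hc h1 h2 hd hs
    refine ⟨r1, r2, ?_, r7⟩
    obtain ⟨a, rfl⟩ := hd
    rw [Nat.mul_div_cancel_left _ hk0] at r3 r4 r5 r6
    have haeven : Even a := by
      rcases Nat.even_or_odd a with he | ho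
      · exact he
      · have := val_odd k a ho
        omega
    rw [r6]
    refine val_odd k (c - a) ?_
    rw [Nat.odd_iff] at hcodd ⊢
    rw [Nat.even_iff] at haeven
    omega
  have hinv : ∀ l ∈ S ∪ T, c * 2^k - (c * 2^k - l) = l := by
    rintro l hl
    have h2 : l ≤ c * 2^k - 1 := by
      rcases hl with h | h
      · exact h.2.1
      · exact h.2.1
    have : 1 ≤ c * 2^k := Nat.one_le_iff_ne_zero.mpr (by positivity)
    omega
  have hbij : Set.BijOn (fun l => c * 2 ^ k - l) S T := by
    refine ⟨hmapsto, ?_, ?_⟩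
    · intro x hx y hy hxy
      simp only at hxy
      have := hinv x (Or.inl hx)
      have := hinv y (Or.inl hy)
      omega
    · intro y hy
      exact ⟨c * 2^k - y, hmapsto' y hy, hinv y (Or.inr hy)⟩
  exact ⟨hbij, by rw [← hbij.image_eq, Set.ncard_image_of_injOn hbij.injOn]⟩
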